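/- Let X be a Banach space and M, N closed subspaces of X such that M + N is closed and M ∩ N = {0}. Then M and N have a common complement in M ⊕ N if and only if M and N are isomorphic as Banach spaces. -/

import Mathlib

open Submodule

section Aux

variable {X : Type*} [NormedAddCommGroup X] [NormedSpace ℝ X]

lemma comap_subtype_sup_of_le {p a b : Submodule ℝ X} (ha : a ≤ p) (hb : b ≤ p) :
    (a ⊔ b).comap p.subtype = a.comap p.subtype ⊔ b.comap p.subtype := by
  apply le_antisymm
  · rintro ⟨x, hxp⟩ hx
    simp only [Submodule.mem_comap, Submodule.coe_subtype] at hx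
    rcases Submodule.mem_sup.1 hx with ⟨y, hy, z, hz, rfl⟩
    exact Submodule.mem_sup.2 ⟨⟨y, ha hy⟩, hy, ⟨z, hb hz⟩, hz, rfl⟩
  · exact sup_le (Submodule.comap_mono le_sup_left) (Submodule.comap_mono le_sup_right)

/-- `comapSubtypeEquivOfLe` as a continuous linear equivalence. -/
noncomputable def comapSubtypeCLE {p q : Submodule ℝ X} (hpq : p ≤ q) :
    (p.comap q.subtype) ≃L[ℝ] p :=
  { Submodule.comapSubtypeEquivOfLe hpq with
    continuous_toFun := by
      apply Continuous.subtype_mk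
      exact continuous_subtype_val.comp continuous_subtype_val
    continuous_invFun := by
      apply Continuous.subtype_mk
      exact Continuous.subtype_mk continuous_subtype_val _ }

end Aux

theorem stmt_11 {X : Type*} [NormedAddCommGroup X] [NormedSpace ℝ X] [CompleteSpace X]
    (M N : Submodule ℝ X) (hM : IsClosed (M : Set X)) (hN : IsClosed (N : Set X))
    (hsum : IsClosed ((M ⊔ N : Submodule ℝ X) : Set X)) (hint : M ⊓ N = ⊥) :
    (∃ K : Submodule ℝ X, IsClosed (K : Set X) ∧ K ≤ M ⊔ N ∧
        M ⊓ K = ⊥ ∧ M ⊔ K = M ⊔ N ∧ N ⊓ K = ⊥ ∧ N ⊔ K = M ⊔ N) ↔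
      Nonempty (M ≃L[ℝ] N) := by
  haveI : CompleteSpace M := hM.completeSpace_coe
  haveI : CompleteSpace N := hN.completeSpace_coe
  haveI : CompleteSpace (M ⊔ N : Submodule ℝ X) := hsum.completeSpace_coe
  constructor
  · rintro ⟨K, hK, hKle, hMK, hMKsup, hNK, hNKsup⟩
    -- work inside Y := M ⊔ N
    set Y : Submodule ℝ X := M ⊔ N with hY
    set M' : Submodule ℝ Y := M.comap Y.subtype with hM'
    set N' : Submodule ℝ Y := N.comap Y.subtype with hN'
    set K' : Submodule ℝ Y := K.comap Y.subtype with hK'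
    have hMle : M ≤ Y := le_sup_left
    have hNle : N ≤ Y := le_sup_right
    have hM'c : IsClosed (M' : Set Y) := hM.preimage continuous_subtype_val
    have hN'c : IsClosed (N' : Set Y) := hN.preimage continuous_subtype_val
    have hK'c : IsClosed (K' : Set Y) := hK.preimage continuous_subtype_val
    have hbot : ∀ {a b : Submodule ℝ X}, a ⊓ b = ⊥ →
        a.comap Y.subtype ⊓ b.comap Y.subtype = ⊥ := by
      intro a b hab
      rw [← Submodule.comap_inf, hab]
      rw [Submodule.comap_bot, Submodule.ker_subtype]
    have hcomplMK : IsCompl M' K' := by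
      constructor
      · exact disjoint_iff.2 (hbot hMK)
      · rw [codisjoint_iff, hM', hK', ← comap_subtype_sup_of_le hMle hKle, hMKsup]
        exact Submodule.comap_subtype_self _
    have hcomplNK : IsCompl N' K' := by
      constructor
      · exact disjoint_iff.2 (hbot hNK)
      · rw [codisjoint_iff, hN', hK', ← comap_subtype_sup_of_le hNle hKle, hNKsup]
        exact Submodule.comap_subtype_self _
    haveI : CompleteSpace M' := hM'c.completeSpace_coe
    haveI : CompleteSpace N' := hN'c.completeSpace_coe
    -- projection of Y onto N' along K'
    let π : Y →L[ℝ] N' := N'.linearProjOfClosedCompl K' hcomplNK hN'c hK'c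
    let f : M' →L[ℝ] N' := π.comp M'.subtypeL
    have hfval : ∀ m : M', (f m : Y) = N'.projectionOnto K' hcomplNK (m : Y) := by
      intro m; rfl
    have hker : LinearMap.ker (f : M' →ₗ[ℝ] N') = ⊥ := by
      rw [LinearMap.ker_eq_bot']
      intro m hm
      have h0 : N'.projectionOnto K' hcomplNK (m : Y) = 0 := by
        have := congrArg (Subtype.val) (show f m = 0 from hm)
        exact Subtype.ext (by simpa [hfval] using this)
      have hmK : (m : Y) ∈ K' :=
        (Submodule.projectionOnto_apply_eq_zero_iff hcomplNK).1 h0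
      have : (m : Y) ∈ M' ⊓ K' := ⟨m.2, hmK⟩
      rw [hbot hMK] at this
      exact Subtype.ext this
    have hrange : LinearMap.range (f : M' →ₗ[ℝ] N') = ⊤ := by
      rw [LinearMap.range_eq_top]
      intro n
      have : ((n : Y) : Y) ∈ M' ⊔ K' := by
        rw [codisjoint_iff.1 hcomplMK.codisjoint]; trivial
      rcases Submodule.mem_sup.1 this with ⟨m, hm, k, hk, hmk⟩
      refine ⟨⟨m, hm⟩, ?_⟩
      apply Subtype.ext
      rw [ContinuousLinearMap.coe_coe, hfval]
      have : N'.projectionOnto K' hcomplNK m =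
          N'.projectionOnto K' hcomplNK (m + k) := by
        rw [map_add, Submodule.projectionOnto_apply_of_mem_right hcomplNK hk, add_zero]
      rw [this, hmk, Submodule.projectionOnto_apply_left hcomplNK n]
    let e' : M' ≃L[ℝ] N' := ContinuousLinearEquiv.ofBijective f hker hrange
    exact ⟨((comapSubtypeCLE hMle).symm.trans e').trans (comapSubtypeCLE hNle)⟩
  · rintro ⟨e⟩
    -- the map (m, n) ↦ m + n from M × N onto M ⊔ N is a Banach isomorphism
    obtain ⟨C, hC⟩ : ∃ C : NNReal, ∀ (m : ↥M) (n : ↥N), ‖m‖ ≤ C * ‖(m : X) + (n : X)‖ := by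
      let φ₀ : ↥M × ↥N →L[ℝ] X := M.subtypeL.coprod N.subtypeL
      have hφ₀mem : ∀ p : ↥M × ↥N, φ₀ p ∈ M ⊔ N := fun p =>
        Submodule.add_mem_sup p.1.2 p.2.2
      let φ : ↥M × ↥N →L[ℝ] (M ⊔ N : Submodule ℝ X) := φ₀.codRestrict (M ⊔ N) hφ₀mem
      have hφker : LinearMap.ker (φ : ↥M × ↥N →ₗ[ℝ] (M ⊔ N : Submodule ℝ X)) = ⊥ := by
        rw [LinearMap.ker_eq_bot']
        rintro ⟨m, n⟩ h
        have h' : (m : X) + n = 0 := congrArg Subtype.val h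
        have hm : (m : X) ∈ M ⊓ N := ⟨m.2, by
          have : (m : X) = -(n : X) := by rw [eq_neg_iff_add_eq_zero]; exact h'
          rw [this]; exact N.neg_mem n.2⟩
        rw [hint] at hm
        have hm0 : (m : X) = 0 := hm
        have hn0 : (n : X) = 0 := by
          have := h'; rw [hm0, zero_add] at this; exact this
        exact Prod.ext (Subtype.ext hm0) (Subtype.ext hn0)
      have hφrange : LinearMap.range (φ : ↥M × ↥N →ₗ[ℝ] (M ⊔ N : Submodule ℝ X)) = ⊤ := by
        rw [LinearMap.range_eq_top]
        rintro ⟨x, hx⟩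
        rcases Submodule.mem_sup.1 hx with ⟨m, hm, n, hn, rfl⟩
        exact ⟨(⟨m, hm⟩, ⟨n, hn⟩), rfl⟩
      let Φ : (↥M × ↥N) ≃L[ℝ] (M ⊔ N : Submodule ℝ X) :=
        ContinuousLinearEquiv.ofBijective φ hφker hφrange
      refine ⟨‖(Φ.symm : (M ⊔ N : Submodule ℝ X) →L[ℝ] ↥M × ↥N)‖₊, fun m n => ?_⟩
      have h1 : ‖m‖ ≤ ‖(m, n)‖ := le_max_left _ _
      have h2 : Φ.symm (Φ (m, n)) = (m, n) := Φ.symm_apply_apply _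
      calc ‖m‖ ≤ ‖(m, n)‖ := h1
        _ = ‖Φ.symm (Φ (m, n))‖ := by rw [h2]
        _ ≤ ‖(Φ.symm : (M ⊔ N : Submodule ℝ X) →L[ℝ] ↥M × ↥N)‖ * ‖Φ (m, n)‖ :=
          (Φ.symm : (M ⊔ N : Submodule ℝ X) →L[ℝ] ↥M × ↥N).le_opNorm _
        _ = _ := rfl
    -- the twisted diagonal
    obtain ⟨g, hgval⟩ : ∃ g : ↥M →L[ℝ] X, ∀ m : ↥M, g m = (m : X) - (e m : X) :=
      ⟨M.subtypeL - N.subtypeL.comp (e : ↥M →L[ℝ] ↥N), fun m => rfl⟩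
    have hganti : AntilipschitzWith C g := by
      apply ContinuousLinearMap.antilipschitz_of_bound
      intro m
      have h1 := hC m (-(e m))
      have h2 : (m : X) + ((-(e m) : ↥N) : X) = g m := by rw [hgval]; push_cast; abel
      rw [h2] at h1
      exact h1
    set K : Submodule ℝ X := LinearMap.range (g : ↥M →ₗ[ℝ] X) with hKdef
    have hKmem : ∀ m : ↥M, g m ∈ K := fun m => ⟨m, rfl⟩
    have hKle : K ≤ M ⊔ N := by
      rintro x ⟨m, rfl⟩
      show ((g : ↥M →ₗ[ℝ] X) m) ∈ M ⊔ N
      have : (g : ↥M →ₗ[ℝ] X) m = g m := rfl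
      rw [this, hgval]
      exact Submodule.sub_mem _ (Submodule.mem_sup_left m.2)
        (Submodule.mem_sup_right (e m).2)
    refine ⟨K, ?_, hKle, ?_, ?_, ?_, ?_⟩
    · have : (K : Set X) = Set.range g := by
        ext x
        simp only [hKdef, SetLike.mem_coe, LinearMap.mem_range, Set.mem_range]
        rfl
      rw [this]
      exact hganti.isClosed_range g.uniformContinuous
    · rw [eq_bot_iff]
      rintro x ⟨hxM, m, rfl⟩
      have hgm : (g : ↥M →ₗ[ℝ] X) m = g m := rfl
      rw [hgm] at hxM ⊢
      have hEm : ((e m : X)) ∈ M ⊓ N := by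
        constructor
        · have : (e m : X) = (m : X) - g m := by rw [hgval]; abel
          rw [this]
          exact Submodule.sub_mem M m.2 hxM
        · exact (e m).2
      rw [hint] at hEm
      have : e m = 0 := Subtype.ext hEm
      have hm0 : m = 0 := by
        have := congrArg e.symm this
        simpa using this
      simp [hgval, hm0]
    · apply le_antisymm
      · exact sup_le le_sup_left hKle
      · refine sup_le le_sup_left fun n hn => ?_
        have key : n = ((e.symm ⟨n, hn⟩ : ↥M) : X) - g (e.symm ⟨n, hn⟩) := by
          rw [hgval]
          have : e (e.symm ⟨n, hn⟩) = ⟨n, hn⟩ := e.apply_symm_apply _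
          rw [this]; abel
        rw [key]
        exact Submodule.sub_mem _ (Submodule.mem_sup_left (e.symm ⟨n, hn⟩).2)
          (Submodule.mem_sup_right (hKmem _))
    · rw [eq_bot_iff]
      rintro x ⟨hxN, m, rfl⟩
      have hgm : (g : ↥M →ₗ[ℝ] X) m = g m := rfl
      rw [hgm] at hxN ⊢
      have hm : (m : X) ∈ M ⊓ N := by
        refine ⟨m.2, ?_⟩
        have : (m : X) = g m + (e m : X) := by rw [hgval]; abel
        rw [this]
        exact Submodule.add_mem N hxN (e m).2
      rw [hint] at hm
      have hm0 : m = 0 := Subtype.ext hm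
      simp [hgval, hm0]
    · apply le_antisymm
      · exact sup_le le_sup_right hKle
      · refine sup_le (fun m hm => ?_) le_sup_left
        have key : m = ((e ⟨m, hm⟩ : ↥N) : X) + g ⟨m, hm⟩ := by rw [hgval]; abel
        rw [key]
        exact Submodule.add_mem _ (Submodule.mem_sup_left (e ⟨m, hm⟩).2)
          (Submodule.mem_sup_right (hKmem _))
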